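/- Let φ be a fixed realization (all vertex and edge states in {0,1}) of the A-RMKCG model with nonincreasing revenue vector R_0 ≥ ... ≥ R_k ≥ 0. Define f(D) = f(D,φ) = Σ_i R_i |D_i(D,φ)| with hop levels D_i as usual. Then for any D ⊆ D' and u ∉ D', f(D ∪ {u}) − f(D) ≥ f(D' ∪ {u}) − f(D') in the special case k = 1. -/

import Mathlib

open Finset

variable {V : Type*} [Fintype V] [DecidableEq V]

/-- The 0-hop participants for invited set `D` under vertex states `φv`:
the invited users that accept. They earn `R 0` each. -/
def level0 (φv : V → Bool) (D : Finset V) : Finset V :=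
  D.filter fun v => φv v

/-- The 1-hop participants: vertices outside `D₀` with a live edge (`φe`) to a
vertex of `D₀`. They earn `R 1` each. -/
def level1 (G : SimpleGraph V) [DecidableRel G.Adj] (φv : V → Bool)
    (φe : V → V → Bool) (D : Finset V) : Finset V :=
  Finset.univ.filter fun v =>
    v ∉ level0 φv D ∧ ∃ w ∈ level0 φv D, G.Adj w v ∧ φe w v

/-- The realized revenue for `k = 1`: `f(D,φ) = R₀·|D₀| + R₁·|D₁|`. -/
def realizedRevenue1 (G : SimpleGraph V) [DecidableRel G.Adj] (φv : V → Bool)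
    (φe : V → V → Bool) (R0 R1 : ℝ) (D : Finset V) : ℝ :=
  R0 * (level0 φv D).card + R1 * (level1 G φv φe D).card

lemma mem_level0' {φv : V → Bool} {D : Finset V} {v : V} :
    v ∈ level0 φv D ↔ v ∈ D ∧ φv v := by simp [level0]

/-- Per-vertex contribution to the realized revenue. -/
def gval (G : SimpleGraph V) [DecidableRel G.Adj] (φv : V → Bool)
    (φe : V → V → Bool) (R0 R1 : ℝ) (D : Finset V) (v : V) : ℝ :=
  if v ∈ level0 φv D then R0 else if v ∈ level1 G φv φe D then R1 else 0

lemma gval_eq (G : SimpleGraph V) [DecidableRel G.Adj] (φv : V → Bool)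
    (φe : V → V → Bool) (R0 R1 : ℝ) (D : Finset V) (v : V) :
    gval G φv φe R0 R1 D v =
      if v ∈ D ∧ φv v then R0
      else if ∃ w ∈ level0 φv D, G.Adj w v ∧ φe w v then R1 else 0 := by
  unfold gval
  by_cases h0 : v ∈ level0 φv D
  · rw [if_pos h0, if_pos (mem_level0'.mp h0)]
  · have h0' : ¬ (v ∈ D ∧ φv v) := fun h => h0 (mem_level0'.mpr h)
    rw [if_neg h0, if_neg h0']
    simp [level1, h0]

lemma revenue_eq_sum (G : SimpleGraph V) [DecidableRel G.Adj] (φv : V → Bool)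
    (φe : V → V → Bool) (R0 R1 : ℝ) (D : Finset V) :
    realizedRevenue1 G φv φe R0 R1 D = ∑ v, gval G φv φe R0 R1 D v := by
  have hsplit : ∀ v : V, gval G φv φe R0 R1 D v =
      (if v ∈ level0 φv D then R0 else 0) +
      (if v ∈ level1 G φv φe D then R1 else 0) := by
    intro v
    unfold gval
    by_cases h0 : v ∈ level0 φv D
    · have h1 : v ∉ level1 G φv φe D := by
        simp only [level1, Finset.mem_filter]
        rintro ⟨-, h, -⟩; exact h h0
      simp [h0, h1]
    · simp [h0]
  calc realizedRevenue1 G φv φe R0 R1 D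
      = (∑ v, if v ∈ level0 φv D then R0 else 0) +
        (∑ v, if v ∈ level1 G φv φe D then R1 else 0) := by
        unfold realizedRevenue1
        rw [Finset.sum_ite_mem, Finset.sum_ite_mem, Finset.univ_inter,
          Finset.univ_inter, Finset.sum_const, Finset.sum_const,
          nsmul_eq_mul, nsmul_eq_mul, mul_comm, mul_comm ((level1 G φv φe D).card : ℝ)]
    _ = ∑ v, gval G φv φe R0 R1 D v := by
        rw [← Finset.sum_add_distrib]
        exact Finset.sum_congr rfl fun v _ => (hsplit v).symm

lemma gval_submodular (G : SimpleGraph V) [DecidableRel G.Adj]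
    (φv : V → Bool) (φe : V → V → Bool) (R0 R1 : ℝ) (hR1 : 0 ≤ R1)
    (D D' : Finset V) (hDD' : D ⊆ D') (u : V) (hu : u ∉ D') (v : V) :
    gval G φv φe R0 R1 (insert u D') v - gval G φv φe R0 R1 D' v ≤
      gval G φv φe R0 R1 (insert u D) v - gval G φv φe R0 R1 D v := by
  have huD : u ∉ D := fun h => hu (hDD' h)
  -- connectivity predicates
  set cD : Prop := ∃ w ∈ level0 φv D, G.Adj w v ∧ φe w v with hcD
  set cD' : Prop := ∃ w ∈ level0 φv D', G.Adj w v ∧ φe w v with hcD'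
  have hconn_mono : cD → cD' := by
    rintro ⟨w, hw, h⟩
    exact ⟨w, mem_level0'.mpr ⟨hDD' (mem_level0'.mp hw).1, (mem_level0'.mp hw).2⟩, h⟩
  have hins : ∀ (E : Finset V),
      (∃ w ∈ level0 φv (insert u E), G.Adj w v ∧ φe w v) ↔
        ((∃ w ∈ level0 φv E, G.Adj w v ∧ φe w v) ∨ (φv u ∧ G.Adj u v ∧ φe u v)) := by
    intro E
    constructor
    · rintro ⟨w, hw, h⟩
      rcases mem_level0'.mp hw with ⟨hwE, hφw⟩
      rcases Finset.mem_insert.mp hwE with rfl | hwE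
      · exact Or.inr ⟨hφw, h⟩
      · exact Or.inl ⟨w, mem_level0'.mpr ⟨hwE, hφw⟩, h⟩
    · rintro (⟨w, hw, h⟩ | ⟨hφu, h⟩)
      · exact ⟨w, mem_level0'.mpr ⟨Finset.mem_insert_of_mem (mem_level0'.mp hw).1,
          (mem_level0'.mp hw).2⟩, h⟩
      · exact ⟨u, mem_level0'.mpr ⟨Finset.mem_insert_self u E, hφu⟩, h⟩
  rw [gval_eq, gval_eq, gval_eq, gval_eq]
  by_cases hvu : v = u
  · subst hvu
    by_cases hφu : φv v = true
    · have h1 : v ∈ insert v D ∧ φv v := ⟨Finset.mem_insert_self v D, hφu⟩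
      have h1' : v ∈ insert v D' ∧ φv v := ⟨Finset.mem_insert_self v D', hφu⟩
      have h2 : ¬ (v ∈ D ∧ φv v) := fun h => huD h.1
      have h2' : ¬ (v ∈ D' ∧ φv v) := fun h => hu h.1
      rw [if_pos h1, if_pos h1', if_neg h2, if_neg h2']
      by_cases hc : cD
      · rw [if_pos hc, if_pos (hconn_mono hc)]
      · rw [if_neg hc, sub_zero]
        by_cases hc' : cD'
        · rw [if_pos hc']; linarith
        · rw [if_neg hc', sub_zero]
    · have hφu' : ¬ (φv v = true) := hφu
      have e1 : ¬ (v ∈ insert v D ∧ φv v) := fun h => hφu' h.2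
      have e1' : ¬ (v ∈ insert v D' ∧ φv v) := fun h => hφu' h.2
      have e2 : ¬ (v ∈ D ∧ φv v) := fun h => hφu' h.2
      have e2' : ¬ (v ∈ D' ∧ φv v) := fun h => hφu' h.2
      rw [if_neg e1, if_neg e1', if_neg e2, if_neg e2']
      have nohit : ¬ (φv v ∧ G.Adj v v ∧ φe v v) := fun h => hφu' h.1
      have r1 : (∃ w ∈ level0 φv (insert v D), G.Adj w v ∧ φe w v) ↔ cD :=
        (hins D).trans (or_iff_left nohit)
      have r1' : (∃ w ∈ level0 φv (insert v D'), G.Adj w v ∧ φe w v) ↔ cD' :=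
        (hins D').trans (or_iff_left nohit)
      rw [if_congr r1 rfl rfl, if_congr r1' rfl rfl,
        show (if (∃ w ∈ level0 φv D, G.Adj w v ∧ φe w v) then R1 else (0:ℝ)) =
          if cD then R1 else 0 from if_congr (iff_of_eq hcD).symm rfl rfl,
        show (if (∃ w ∈ level0 φv D', G.Adj w v ∧ φe w v) then R1 else (0:ℝ)) =
          if cD' then R1 else 0 from if_congr (iff_of_eq hcD').symm rfl rfl]
      simp
  · -- v ≠ u
    have hmem : ∀ (E : Finset V), (v ∈ insert u E ∧ φv v) ↔ (v ∈ E ∧ φv v) := by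
      intro E
      constructor
      · rintro ⟨hvE, hφ⟩
        rcases Finset.mem_insert.mp hvE with rfl | hvE
        · exact absurd rfl hvu
        · exact ⟨hvE, hφ⟩
      · rintro ⟨hvE, hφ⟩; exact ⟨Finset.mem_insert_of_mem hvE, hφ⟩
    by_cases h0 : v ∈ D ∧ φv v
    · have h0' : v ∈ D' ∧ φv v := ⟨hDD' h0.1, h0.2⟩
      rw [if_pos h0, if_pos h0', if_pos ((hmem D).mpr h0), if_pos ((hmem D').mpr h0')]
    · rw [if_neg h0, if_neg (fun h => h0 ((hmem D).mp h))]
      by_cases h0' : v ∈ D' ∧ φv v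
      · rw [if_pos h0', if_pos ((hmem D').mpr h0'), sub_self]
        by_cases hc : cD
        · have : (∃ w ∈ level0 φv (insert u D), G.Adj w v ∧ φe w v) := by
            rw [hins]; exact Or.inl hc
          rw [if_pos this, if_pos hc, sub_self]
        · rw [if_neg hc, sub_zero]
          by_cases hci : (∃ w ∈ level0 φv (insert u D), G.Adj w v ∧ φe w v)
          · rw [if_pos hci]; exact hR1
          · rw [if_neg hci]
      · rw [if_neg h0', if_neg (fun h => h0' ((hmem D').mp h))]
        by_cases hc : cD
        · have hc' : cD' := hconn_mono hc
          have hi : (∃ w ∈ level0 φv (insert u D), G.Adj w v ∧ φe w v) :=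
            (hins D).mpr (Or.inl hc)
          have hi' : (∃ w ∈ level0 φv (insert u D'), G.Adj w v ∧ φe w v) :=
            (hins D').mpr (Or.inl hc')
          rw [if_pos hc, if_pos hc', if_pos hi, if_pos hi']
        · rw [if_neg hc, sub_zero]
          by_cases hhit : (φv u ∧ G.Adj u v ∧ φe u v)
          · have hi : (∃ w ∈ level0 φv (insert u D), G.Adj w v ∧ φe w v) := by
              rw [hins]; exact Or.inr hhit
            have hi' : (∃ w ∈ level0 φv (insert u D'), G.Adj w v ∧ φe w v) := by
              rw [hins]; exact Or.inr hhit
            rw [if_pos hi, if_pos hi']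
            by_cases hc' : cD'
            · rw [if_pos hc']; linarith
            · rw [if_neg hc', sub_zero]
          · have hi : ¬ (∃ w ∈ level0 φv (insert u D), G.Adj w v ∧ φe w v) :=
              fun h => ((hins D).mp h).elim hc hhit
            have hiff : (∃ w ∈ level0 φv (insert u D'), G.Adj w v ∧ φe w v) ↔ cD' :=
              (hins D').trans (or_iff_left hhit)
            rw [if_neg hi, if_congr hiff rfl rfl]
            simp [hcD']

/-- for any fixed realization (`φv`, symmetric `φe`) and
`R₀ ≥ R₁ ≥ 0`, the realized revenue with `k = 1` is submodular in the
invited set. -/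
theorem realizedRevenue1_submodular (G : SimpleGraph V) [DecidableRel G.Adj]
    (φv : V → Bool) (φe : V → V → Bool) (hφe : ∀ u v, φe u v = φe v u)
    (R0 R1 : ℝ) (hR01 : R1 ≤ R0) (hR1 : 0 ≤ R1)
    (D D' : Finset V) (hDD' : D ⊆ D') (u : V) (hu : u ∉ D') :
    realizedRevenue1 G φv φe R0 R1 (insert u D') - realizedRevenue1 G φv φe R0 R1 D' ≤
      realizedRevenue1 G φv φe R0 R1 (insert u D) - realizedRevenue1 G φv φe R0 R1 D := by
  rw [revenue_eq_sum, revenue_eq_sum, revenue_eq_sum, revenue_eq_sum,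
    ← Finset.sum_sub_distrib, ← Finset.sum_sub_distrib]
  exact Finset.sum_le_sum fun v _ =>
    gval_submodular G φv φe R0 R1 hR1 D D' hDD' u hu v
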